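/- Let A be an abelian category with enough projectives and T a weak tilting subcategory. Then (⊥₁(Fac T), Fac T) is a complete cotorsion pair, and ⊥₁(Fac T) = {X ∈ ⊥₁T : pd X ≤ 1}. If moreover T is tilting, then ⊥₁(Fac T) ∩ Fac T = T. -/

import Mathlib

open CategoryTheory Category Limits

attribute [local instance] CategoryTheory.Abelian.hasFiniteBiproducts
attribute [local instance] CategoryTheory.Limits.HasFiniteBiproducts.of_hasFiniteProducts

universe w v u

namespace Paper

variable {A : Type u} [Category.{v} A] [Abelian A]

/-- `IsSes i p` expresses that `0 ⟶ X ⟶ Y ⟶ Z ⟶ 0` is a short exact sequence. -/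
def IsSes {X Y Z : A} (i : X ⟶ Y) (p : Y ⟶ Z) : Prop :=
  ∃ w : i ≫ p = 0, (ShortComplex.mk i p w).ShortExact

/-- `Ext¹(X, Y) = 0`, phrased as: every extension of `X` by `Y` splits. -/
def Ext1Zero (X Y : A) : Prop :=
  ∀ ⦃E : A⦄ (i : Y ⟶ E) (p : E ⟶ X), IsSes i p → ∃ s : X ⟶ E, s ≫ p = 𝟙 X

/-- A torsion pair `(T, F)` of (strictly full) subcategories of an abelian category. -/
structure IsTorsionPair (T F : Set A) : Prop where
  isoClosed_torsion : ∀ {X Y : A}, (X ≅ Y) → X ∈ T → Y ∈ T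
  isoClosed_torsionFree : ∀ {X Y : A}, (X ≅ Y) → X ∈ F → Y ∈ F
  hom_zero : ∀ {X Y : A}, X ∈ T → Y ∈ F → ∀ f : X ⟶ Y, f = 0
  seq : ∀ X : A, ∃ (tX fX : A) (i : tX ⟶ X) (p : X ⟶ fX), tX ∈ T ∧ fX ∈ F ∧ IsSes i p

/-- A (complete) cotorsion pair `(C, D)` in an abelian category. -/
structure IsCotorsionPair (C D : Set A) : Prop where
  left_eq : C = {X : A | ∀ Y ∈ D, Ext1Zero X Y}
  right_eq : D = {Y : A | ∀ X ∈ C, Ext1Zero X Y}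
  seq₁ : ∀ X : A, ∃ (dX cX : A) (i : dX ⟶ cX) (p : cX ⟶ X), dX ∈ D ∧ cX ∈ C ∧ IsSes i p
  seq₂ : ∀ X : A, ∃ (dX cX : A) (i : X ⟶ dX) (p : dX ⟶ cX), dX ∈ D ∧ cX ∈ C ∧ IsSes i p

/-- `f` factors through some object belonging to the class `P`. -/
def FactorsThroughClass (P : Set A) {X Y : A} (f : X ⟶ Y) : Prop :=
  ∃ (Z : A) (_ : Z ∈ P) (a : X ⟶ Z) (b : Z ⟶ Y), a ≫ b = f

/-- The hom-relation on the full subcategory on `S` identifying two morphisms whose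
difference factors through an object of `P`. -/
def quotRel (S P : Set A) : HomRel (ObjectProperty.FullSubcategory (· ∈ S)) :=
  fun {X Y} f g =>
    FactorsThroughClass P ((show X.obj ⟶ Y.obj from f.hom) - (show X.obj ⟶ Y.obj from g.hom))

/-- The additive quotient of the full subcategory on `S` by the morphisms factoring
through objects of `P`. -/
abbrev AddQuot (S P : Set A) := CategoryTheory.Quotient (quotRel S P)

/-- The subcategory of quotients of (finite direct sums of) objects of `T`. -/
def Fac (T : Set A) : Set A := {X : A | ∃ Y ∈ T, ∃ p : Y ⟶ X, Epi p}

/-- The right `Hom`-orthogonal `T^⊥`. -/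
def rightHomPerp (T : Set A) : Set A := {X : A | ∀ Y ∈ T, ∀ f : Y ⟶ X, f = 0}

/-- The left `Hom`-orthogonal `^⊥F`. -/
def leftHomPerp (F : Set A) : Set A := {X : A | ∀ Y ∈ F, ∀ f : X ⟶ Y, f = 0}

/-- The right `Ext¹`-orthogonal `T^{⊥₁}`. -/
def rightExt1Perp (T : Set A) : Set A := {X : A | ∀ Y ∈ T, Ext1Zero Y X}

/-- The left `Ext¹`-orthogonal `^{⊥₁}D`. -/
def leftExt1Perp (D : Set A) : Set A := {X : A | ∀ Y ∈ D, Ext1Zero X Y}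

/-- `X` has projective dimension at most one: it has a length-one projective resolution. -/
def PdLeOne (X : A) : Prop :=
  ∃ (P₁ P₀ : A) (i : P₁ ⟶ P₀) (p : P₀ ⟶ X), Projective P₁ ∧ Projective P₀ ∧ IsSes i p

/-- A weak tilting subcategory of an abelian category with enough projectives. -/
structure IsWeakTilting (T : Set A) : Prop where
  sum_mem : ∀ {X Y : A}, X ∈ T → Y ∈ T → (X ⊞ Y) ∈ T
  summand_mem : ∀ {X Y : A}, X ∈ T → (∃ (s : Y ⟶ X) (r : X ⟶ Y), s ≫ r = 𝟙 Y) → Y ∈ T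
  ext1_zero : ∀ {X Y : A}, X ∈ T → Y ∈ T → Ext1Zero X Y
  pd_le_one : ∀ X ∈ T, PdLeOne X
  coresolution : ∀ P : A, Projective P → ∃ (T₀ T₁ : A) (i : P ⟶ T₀) (p : T₀ ⟶ T₁),
    T₀ ∈ T ∧ T₁ ∈ T ∧ IsSes i p

/-- `φ : X ⟶ E` is a right `T`-approximation of `E`. -/
def IsRightApprox (T : Set A) {X E : A} (φ : X ⟶ E) : Prop :=
  X ∈ T ∧ ∀ X' ∈ T, ∀ f : X' ⟶ E, ∃ g : X' ⟶ X, g ≫ φ = f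

/-- A tilting subcategory: a weak tilting subcategory that is contravariantly finite. -/
structure IsTilting (T : Set A) extends IsWeakTilting T : Prop where
  contravariantly_finite : ∀ E : A, ∃ (X : A) (φ : X ⟶ E), IsRightApprox T φ



section Proofs

set_option maxHeartbeats 1000000
set_option linter.unusedSectionVars false
set_option linter.unusedVariables false

section SesAPI

variable {X Y Z : A} {i : X ⟶ Y} {p : Y ⟶ Z}

lemma IsSes.w (h : IsSes i p) : i ≫ p = 0 := h.1

lemma IsSes.mono (h : IsSes i p) : Mono i := by
  obtain ⟨z, hse⟩ := h; exact hse.mono_f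

lemma IsSes.epi (h : IsSes i p) : Epi p := by
  obtain ⟨z, hse⟩ := h; exact hse.epi_g

lemma IsSes.exists_lift (h : IsSes i p) {W : A} (k : W ⟶ Y) (hk : k ≫ p = 0) :
    ∃ u : W ⟶ X, u ≫ i = k := by
  obtain ⟨z, hse⟩ := h
  have := hse.mono_f
  exact hse.exact.lift' k hk

lemma IsSes.exists_desc (h : IsSes i p) {W : A} (k : Y ⟶ W) (hk : i ≫ k = 0) :
    ∃ u : Z ⟶ W, p ≫ u = k := by
  obtain ⟨z, hse⟩ := h
  have := hse.epi_g
  exact hse.exact.desc' k hk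

lemma isSes_of_ker (hi : Mono i) (hp : Epi p) (w : i ≫ p = 0)
    (hlift : ∀ {W : A} (k : W ⟶ Y), k ≫ p = 0 → ∃ u : W ⟶ X, u ≫ i = k) : IsSes i p := by
  refine ⟨w, ShortComplex.ShortExact.mk' ?_ hi hp⟩
  exact (ShortComplex.mk i p w).exact_of_f_is_kernel
    (KernelFork.IsLimit.ofι' i w (fun k hk => ⟨(hlift k hk).choose, (hlift k hk).choose_spec⟩))

lemma isSes_of_coker (hi : Mono i) (hp : Epi p) (w : i ≫ p = 0)
    (hdesc : ∀ {W : A} (k : Y ⟶ W), i ≫ k = 0 → ∃ u : Z ⟶ W, p ≫ u = k) : IsSes i p := by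
  refine ⟨w, ShortComplex.ShortExact.mk' ?_ hi hp⟩
  exact (ShortComplex.mk i p w).exact_of_g_is_cokernel
    (CokernelCofork.IsColimit.ofπ' p w (fun k hk => ⟨(hdesc k hk).choose, (hdesc k hk).choose_spec⟩))

lemma isSes_kernel {f : Y ⟶ Z} (hf : Epi f) : IsSes (kernel.ι f) f :=
  isSes_of_ker inferInstance hf (kernel.condition f)
    (fun k hk => ⟨kernel.lift f k hk, kernel.lift_ι f k hk⟩)

lemma IsSes.comp_iso_right (h : IsSes i p) {Z' : A} (e : Z ≅ Z') : IsSes i (p ≫ e.hom) := by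
  have hi := h.mono
  have hp := h.epi
  refine isSes_of_ker hi (epi_comp _ _) (by rw [← assoc, h.w, zero_comp]) ?_
  intro W k hk
  refine h.exists_lift k ?_
  have hk' := hk =≫ e.inv
  simpa using hk'

lemma IsSes.iso_comp_left (h : IsSes i p) {X' : A} (e : X' ≅ X) : IsSes (e.hom ≫ i) p := by
  have hi := h.mono
  have hp := h.epi
  refine isSes_of_ker (mono_comp _ _) hp (by rw [assoc, h.w, comp_zero]) ?_
  intro W k hk
  obtain ⟨u, hu⟩ := h.exists_lift k hk
  exact ⟨u ≫ e.inv, by simp [hu]⟩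

lemma IsSes.exists_retraction (h : IsSes i p) {s : Z ⟶ Y} (hs : s ≫ p = 𝟙 Z) :
    ∃ r : Y ⟶ X, i ≫ r = 𝟙 X := by
  obtain ⟨z, hse⟩ := h
  have := hse.mono_f
  have sp := ShortComplex.Splitting.ofExactOfSection _ hse.exact s hs hse.mono_f
  exact ⟨sp.r, sp.f_r⟩

lemma IsSes.nonempty_biprodIso (h : IsSes i p) {s : Z ⟶ Y} (hs : s ≫ p = 𝟙 Z) :
    Nonempty (Y ≅ X ⊞ Z) := by
  obtain ⟨z, hse⟩ := h
  have := hse.mono_f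
  have sp := ShortComplex.Splitting.ofExactOfSection _ hse.exact s hs hse.mono_f
  exact ⟨sp.isoBinaryBiproduct⟩

lemma isSes_biprod_inl_snd (X Z : A) : IsSes (biprod.inl : X ⟶ X ⊞ Z) biprod.snd := by
  refine isSes_of_ker inferInstance inferInstance (by simp) ?_
  intro W k hk
  refine ⟨k ≫ biprod.fst, ?_⟩
  apply biprod.hom_ext <;> simp [hk]

lemma IsSes.biprodMap {X₁ Y₁ Z₁ X₂ Y₂ Z₂ : A} {i₁ : X₁ ⟶ Y₁} {p₁ : Y₁ ⟶ Z₁}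
    {i₂ : X₂ ⟶ Y₂} {p₂ : Y₂ ⟶ Z₂} (h₁ : IsSes i₁ p₁) (h₂ : IsSes i₂ p₂) :
    IsSes (biprod.map i₁ i₂) (biprod.map p₁ p₂) := by
  have m₁ := h₁.mono; have m₂ := h₂.mono
  have e₁ := h₁.epi; have e₂ := h₂.epi
  refine isSes_of_ker ?_ ?_ ?_ ?_
  · rw [Preadditive.mono_iff_cancel_zero]
    intro W g hg
    apply biprod.hom_ext
    · rw [← cancel_mono i₁]
      have := hg =≫ biprod.fst
      simpa using this
    · rw [← cancel_mono i₂]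
      have := hg =≫ biprod.snd
      simpa using this
  · rw [Preadditive.epi_iff_cancel_zero]
    intro W g hg
    apply biprod.hom_ext'
    · rw [← cancel_epi p₁]
      have := biprod.inl ≫= hg
      simpa using this
    · rw [← cancel_epi p₂]
      have := biprod.inr ≫= hg
      simpa using this
  · apply biprod.hom_ext <;> simp [h₁.w, h₂.w]
  · intro W k hk
    obtain ⟨u₁, hu₁⟩ := h₁.exists_lift (k ≫ biprod.fst) (by have := hk =≫ biprod.fst; simpa using this)
    obtain ⟨u₂, hu₂⟩ := h₂.exists_lift (k ≫ biprod.snd) (by have := hk =≫ biprod.snd; simpa using this)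
    refine ⟨biprod.lift u₁ u₂, ?_⟩
    apply biprod.hom_ext <;> simp [hu₁, hu₂]

lemma ext1Zero_of_projective (X Y : A) [Projective X] : Ext1Zero X Y := by
  intro E i p hip
  have := hip.epi
  exact ⟨Projective.factorThru (𝟙 X) p, Projective.factorThru_comp _ _⟩

lemma projective_of_retract {P Q : A} [Projective Q] {s : P ⟶ Q} {r : Q ⟶ P}
    (hsr : s ≫ r = 𝟙 P) : Projective P := by
  constructor
  intro E X' f e he
  obtain ⟨f', hf'⟩ := Projective.factors (r ≫ f) e
  exact ⟨s ≫ f', by rw [assoc, hf', ← assoc, hsr, id_comp]⟩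

end SesAPI


section Pushout

/-- Pushout of a short exact sequence `0 → K → B → C → 0` along `f : K ⟶ Y`. -/
lemma IsSes.pushout {K B C Y : A} {a : K ⟶ B} {b : B ⟶ C} (h : IsSes a b) (f : K ⟶ Y) :
    ∃ (E : A) (j : Y ⟶ E) (g : B ⟶ E) (q : E ⟶ C),
      IsSes j q ∧ f ≫ j = a ≫ g ∧ g ≫ q = b ∧
      (Epi f → Epi g) ∧
      (∀ {D : A} (e : Y ⟶ D), IsSes f e → ∃ q₂ : E ⟶ D, IsSes g q₂ ∧ j ≫ q₂ = e) := by
  have hma := h.mono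
  have hepb := h.epi
  let φ : K ⟶ Y ⊞ B := biprod.lift f (-a)
  have hφz : ∀ {W : A} (z : Y ⊞ B ⟶ W), φ ≫ z = f ≫ biprod.inl ≫ z - a ≫ biprod.inr ≫ z := by
    intro W z
    have : φ = f ≫ biprod.inl - a ≫ biprod.inr := by
      apply biprod.hom_ext <;> simp [φ]
    rw [this]
    simp [Preadditive.sub_comp, assoc]
  have hφmono : Mono φ := by
    rw [Preadditive.mono_iff_cancel_zero]
    intro W g hg
    have h2 := hg =≫ biprod.snd
    simp only [φ, assoc, biprod.lift_snd, zero_comp, Preadditive.comp_neg, neg_eq_zero] at h2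
    rwa [← cancel_mono a, zero_comp]
  have hses : IsSes φ (cokernel.π φ) :=
    isSes_of_coker hφmono inferInstance (cokernel.condition φ)
      (fun k hk => ⟨cokernel.desc φ k hk, cokernel.π_desc φ k hk⟩)
  let π := cokernel.π φ
  let j : Y ⟶ cokernel φ := biprod.inl ≫ π
  let g : B ⟶ cokernel φ := biprod.inr ≫ π
  have hcomm : f ≫ j = a ≫ g := by
    have h0 : φ ≫ π = 0 := cokernel.condition φ
    rw [hφz] at h0
    have := sub_eq_zero.mp h0
    simpa [j, g] using this
  have hbq : φ ≫ biprod.desc (0 : Y ⟶ C) b = 0 := by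
    simp [φ, biprod.lift_desc, h.w]
  let q : cokernel φ ⟶ C := cokernel.desc φ (biprod.desc 0 b) hbq
  have hπq : π ≫ q = biprod.desc 0 b := cokernel.π_desc _ _ _
  have hgq : g ≫ q = b := by rw [assoc, hπq]; simp [g]
  have hjq0 : j ≫ q = 0 := by rw [assoc, hπq]; simp [j]
  have hjmono : Mono j := by
    rw [Preadditive.mono_iff_cancel_zero]
    intro W t ht
    obtain ⟨u, hu⟩ := hses.exists_lift (t ≫ biprod.inl) (by simpa [j, π, assoc] using ht)
    have h2 := hu =≫ biprod.snd
    simp only [φ, assoc, biprod.lift_snd, biprod.inl_snd, comp_zero, Preadditive.comp_neg,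
      neg_eq_zero] at h2
    have hu0 : u = 0 := by rwa [← cancel_mono a, zero_comp]
    rw [hu0, zero_comp] at hu
    have := hu.symm =≫ biprod.fst
    simpa using this
  have hqepi : Epi q := by
    rw [Preadditive.epi_iff_cancel_zero]
    intro W z hz
    have h2 : (π ≫ q) ≫ z = 0 := by rw [assoc, hz, comp_zero]
    rw [hπq] at h2
    have h3 := biprod.inr ≫= h2
    simp only [biprod.inr_desc_assoc, comp_zero] at h3
    rwa [← cancel_epi b, comp_zero]
  have hsesjq : IsSes j q := by
    refine isSes_of_coker hjmono hqepi hjq0 ?_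
    intro W k hk
    have h1 : φ ≫ π ≫ k = 0 := by rw [← assoc, cokernel.condition, zero_comp]
    rw [hφz] at h1
    have hinl : biprod.inl ≫ π ≫ k = 0 := by
      rw [← assoc]; exact hk
    rw [hinl, comp_zero, zero_sub, neg_eq_zero] at h1
    obtain ⟨v, hv⟩ := h.exists_desc (biprod.inr ≫ π ≫ k) h1
    refine ⟨v, ?_⟩
    rw [← cancel_epi π, ← assoc, hπq]
    apply biprod.hom_ext'
    · simp [hinl]
    · simpa [assoc] using hv
  refine ⟨cokernel φ, j, g, q, hsesjq, hcomm, hgq, ?_, ?_⟩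
  · intro hf
    rw [Preadditive.epi_iff_cancel_zero]
    intro W z hz
    have h1 : φ ≫ π ≫ z = 0 := by rw [← assoc, cokernel.condition, zero_comp]
    rw [hφz] at h1
    have hinr : biprod.inr ≫ π ≫ z = 0 := by rw [← assoc]; exact hz
    rw [hinr, comp_zero, sub_zero] at h1
    have hinl : biprod.inl ≫ π ≫ z = 0 := by rwa [← cancel_epi f, comp_zero]
    have hπz : π ≫ z = 0 := by
      apply biprod.hom_ext'
      · rw [comp_zero]; exact hinl
      · rw [comp_zero]; exact hinr
    rwa [← cancel_epi π, comp_zero]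
  · intro D e hfe
    have hme := hfe.mono
    have hee := hfe.epi
    have hq₂0 : φ ≫ biprod.desc e (0 : B ⟶ D) = 0 := by
      simp [φ, biprod.lift_desc, hfe.w]
    let q₂ : cokernel φ ⟶ D := cokernel.desc φ (biprod.desc e 0) hq₂0
    have hπq₂ : π ≫ q₂ = biprod.desc e 0 := cokernel.π_desc _ _ _
    have hjq₂ : j ≫ q₂ = e := by rw [assoc, hπq₂]; simp [j]
    have hgq₂0 : g ≫ q₂ = 0 := by rw [assoc, hπq₂]; simp [g]
    have hgmono : Mono g := by
      rw [Preadditive.mono_iff_cancel_zero]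
      intro W t ht
      obtain ⟨u, hu⟩ := hses.exists_lift (t ≫ biprod.inr) (by simpa [g, π, assoc] using ht)
      have h2 := hu =≫ biprod.fst
      simp only [φ, assoc, biprod.lift_fst, biprod.inr_fst, comp_zero] at h2
      have hu0 : u = 0 := by rwa [← cancel_mono f, zero_comp]
      rw [hu0, zero_comp] at hu
      have := hu.symm =≫ biprod.snd
      simpa using this
    have hq₂epi : Epi q₂ := by
      rw [Preadditive.epi_iff_cancel_zero]
      intro W z hz
      have h2 : (π ≫ q₂) ≫ z = 0 := by rw [assoc, hz, comp_zero]
      rw [hπq₂] at h2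
      have h3 := biprod.inl ≫= h2
      simp only [biprod.inl_desc_assoc, comp_zero] at h3
      rwa [← cancel_epi e, comp_zero]
    have hsesgq₂ : IsSes g q₂ := by
      refine isSes_of_coker hgmono hq₂epi hgq₂0 ?_
      intro W k hk
      have h1 : φ ≫ π ≫ k = 0 := by rw [← assoc, cokernel.condition, zero_comp]
      rw [hφz] at h1
      have hinr : biprod.inr ≫ π ≫ k = 0 := by rw [← assoc]; exact hk
      rw [hinr, comp_zero, sub_zero] at h1
      obtain ⟨v, hv⟩ := hfe.exists_desc (biprod.inl ≫ π ≫ k) h1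
      refine ⟨v, ?_⟩
      rw [← cancel_epi π, ← assoc, hπq₂]
      apply biprod.hom_ext'
      · simpa [assoc] using hv
      · simp [hinr]
    exact ⟨q₂, hsesgq₂, hjq₂⟩

end Pushout

section Pullback

/-- Pullback of a short exact sequence `0 → X → E → Z → 0` along `g : Z' ⟶ Z`. -/
lemma IsSes.pullback {X E Z Z' : A} {i : X ⟶ E} {p : E ⟶ Z} (h : IsSes i p) (g : Z' ⟶ Z) :
    ∃ (E' : A) (j : X ⟶ E') (q : E' ⟶ Z') (t : E' ⟶ E),
      IsSes j q ∧ q ≫ g = t ≫ p ∧ j ≫ t = i ∧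
      (∀ {W : A} (m : W ⟶ Z'), IsSes m g → ∃ j₂ : W ⟶ E', IsSes j₂ t ∧ j₂ ≫ q = m) := by
  have hmi := h.mono
  have hpe := h.epi
  let φ : E ⊞ Z' ⟶ Z := biprod.desc p (-g)
  have hφe : φ = biprod.fst ≫ p - biprod.snd ≫ g := by
    apply biprod.hom_ext' <;> simp [φ]
  have hφepi : Epi φ := by
    rw [Preadditive.epi_iff_cancel_zero]
    intro W z hz
    have h2 := biprod.inl ≫= hz
    simp only [φ, biprod.inl_desc_assoc, comp_zero] at h2
    rwa [← cancel_epi p, comp_zero]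
  let κ := kernel.ι φ
  have hses : IsSes κ φ :=
    isSes_of_ker inferInstance hφepi (kernel.condition φ)
      (fun k hk => ⟨kernel.lift φ k hk, kernel.lift_ι φ k hk⟩)
  let q : kernel φ ⟶ Z' := κ ≫ biprod.snd
  let t : kernel φ ⟶ E := κ ≫ biprod.fst
  have hexp : ∀ {W : A} (y : W ⟶ E ⊞ Z'), y ≫ φ = (y ≫ biprod.fst) ≫ p - (y ≫ biprod.snd) ≫ g := by
    intro W y
    simp [hφe, Preadditive.comp_sub]
  have hκz : ∀ {W : A} (z : W ⟶ kernel φ), (z ≫ t) ≫ p - (z ≫ q) ≫ g = 0 := by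
    intro W z
    have h0 : (z ≫ κ) ≫ φ = 0 := by rw [assoc, kernel.condition, comp_zero]
    rw [hexp] at h0
    simpa [q, t, assoc] using h0
  have hcomm : q ≫ g = t ≫ p := by
    have := hκz (𝟙 _)
    rw [sub_eq_zero] at this
    simpa using this.symm
  have hji : (biprod.lift i (0 : X ⟶ Z')) ≫ φ = 0 := by
    simp [φ, biprod.lift_desc, h.w]
  let j : X ⟶ kernel φ := kernel.lift φ (biprod.lift i 0) hji
  have hjκ : j ≫ κ = biprod.lift i 0 := kernel.lift_ι _ _ _
  have hjt : j ≫ t = i := by rw [show j ≫ t = (j ≫ κ) ≫ biprod.fst by simp [t, assoc], hjκ]; simp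
  have hjq0 : j ≫ q = 0 := by rw [show j ≫ q = (j ≫ κ) ≫ biprod.snd by simp [q, assoc], hjκ]; simp
  have hjmono : Mono j := by
    have : Mono (j ≫ t) := by rw [hjt]; exact hmi
    exact mono_of_mono j t
  have hqepi : Epi q := by
    rw [Preadditive.epi_iff_cancel_zero]
    intro W z hz
    have h1 : κ ≫ biprod.snd ≫ z = 0 := by rw [← assoc]; exact hz
    obtain ⟨v, hv⟩ := hses.exists_desc (biprod.snd ≫ z) h1
    have h2 := biprod.inl ≫= hv
    simp only [φ, biprod.inl_desc_assoc, biprod.inl_snd_assoc, zero_comp] at h2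
    have hv0 : v = 0 := by rwa [← cancel_epi p, comp_zero]
    rw [hv0, comp_zero] at hv
    have := biprod.inr ≫= hv.symm
    simpa using this
  have hsesjq : IsSes j q := by
    refine isSes_of_ker hjmono hqepi hjq0 ?_
    intro W k hk
    have hks : k ≫ q = 0 := hk
    have h2 : (k ≫ t) ≫ p = 0 := by
      have := hκz k
      rwa [hks, zero_comp, sub_zero] at this
    obtain ⟨w', hw'⟩ := h.exists_lift (k ≫ t) h2
    refine ⟨w', ?_⟩
    rw [← cancel_mono κ, assoc, hjκ]
    apply biprod.hom_ext
    · simpa [t, assoc] using hw'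
    · simpa [q, assoc] using hks.symm
  refine ⟨kernel φ, j, q, t, hsesjq, hcomm, hjt, ?_⟩
  intro W m hm
  have hmm := hm.mono
  have hge := hm.epi
  have hj₂0 : (biprod.lift (0 : W ⟶ E) m) ≫ φ = 0 := by
    simp [φ, biprod.lift_desc, hm.w]
  let j₂ : W ⟶ kernel φ := kernel.lift φ (biprod.lift 0 m) hj₂0
  have hj₂κ : j₂ ≫ κ = biprod.lift 0 m := kernel.lift_ι _ _ _
  have hj₂q : j₂ ≫ q = m := by rw [show j₂ ≫ q = (j₂ ≫ κ) ≫ biprod.snd by simp [q, assoc], hj₂κ]; simp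
  have hj₂t0 : j₂ ≫ t = 0 := by rw [show j₂ ≫ t = (j₂ ≫ κ) ≫ biprod.fst by simp [t, assoc], hj₂κ]; simp
  have hj₂mono : Mono j₂ := by
    have : Mono (j₂ ≫ q) := by rw [hj₂q]; exact hmm
    exact mono_of_mono j₂ q
  have htepi : Epi t := by
    rw [Preadditive.epi_iff_cancel_zero]
    intro V z hz
    have h1 : κ ≫ biprod.fst ≫ z = 0 := by rw [← assoc]; exact hz
    obtain ⟨v, hv⟩ := hses.exists_desc (biprod.fst ≫ z) h1
    have h2 := biprod.inr ≫= hv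
    simp only [φ, biprod.inr_desc_assoc, biprod.inr_fst_assoc, zero_comp,
      Preadditive.neg_comp, neg_eq_zero] at h2
    have hv0 : v = 0 := by
      rw [← cancel_epi g, comp_zero]
      exact h2
    rw [hv0, comp_zero] at hv
    have := biprod.inl ≫= hv.symm
    simpa using this
  have hsesj₂t : IsSes j₂ t := by
    refine isSes_of_ker hj₂mono htepi hj₂t0 ?_
    intro V k hk
    have h2 : (k ≫ q) ≫ g = 0 := by
      have := hκz k
      rwa [hk, zero_comp, zero_sub, neg_eq_zero] at this
    obtain ⟨w', hw'⟩ := hm.exists_lift (k ≫ q) h2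
    refine ⟨w', ?_⟩
    rw [← cancel_mono κ, assoc, hj₂κ]
    apply biprod.hom_ext
    · simpa [t, assoc] using hk.symm
    · simpa [q, assoc] using hw'
  exact ⟨j₂, hsesj₂t, hj₂q⟩

end Pullback

section ExtLift

/-- If `Ext¹(X, Y) = 0` and `0 → K → P → X → 0` is exact, then every map `K ⟶ Y`
extends to `P`. -/
lemma exists_extend {K P X Y : A} {a : K ⟶ P} {b : P ⟶ X} (hses : IsSes a b)
    (hext : Ext1Zero X Y) (u : K ⟶ Y) : ∃ v : P ⟶ Y, a ≫ v = u := by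
  obtain ⟨E, j, g, q, hjq, hcomm, hgq, -, -⟩ := hses.pushout u
  obtain ⟨s, hs⟩ := hext j q hjq
  have hw : (g - b ≫ s) ≫ q = 0 := by
    rw [Preadditive.sub_comp, hgq, assoc, hs, comp_id, sub_self]
  obtain ⟨v, hv⟩ := hjq.exists_lift (g - b ≫ s) hw
  refine ⟨v, ?_⟩
  have hm := hjq.mono
  rw [← cancel_mono j, assoc, hv, Preadditive.comp_sub, ← hcomm, ← assoc, hses.w, zero_comp,
    sub_zero]

/-- Conversely, the extension property for a fixed presentation with projective middle
implies `Ext¹(X, Y) = 0`. -/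
lemma ext1Zero_of_lifting {K P X Y : A} {a : K ⟶ P} {b : P ⟶ X} (hses : IsSes a b)
    [Projective P] (hlift : ∀ u : K ⟶ Y, ∃ v : P ⟶ Y, a ≫ v = u) : Ext1Zero X Y := by
  intro E i p hip
  have := hip.epi
  let t : P ⟶ E := Projective.factorThru b p
  have ht : t ≫ p = b := Projective.factorThru_comp _ _
  have h0 : (a ≫ t) ≫ p = 0 := by rw [assoc, ht, hses.w]
  obtain ⟨u, hu⟩ := hip.exists_lift (a ≫ t) h0
  obtain ⟨v, hv⟩ := hlift u
  have h1 : a ≫ (t - v ≫ i) = 0 := by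
    rw [Preadditive.comp_sub, ← assoc, hv, hu, sub_self]
  obtain ⟨s, hs⟩ := hses.exists_desc (t - v ≫ i) h1
  refine ⟨s, ?_⟩
  have := hses.epi
  rw [← cancel_epi b, ← assoc, hs, Preadditive.sub_comp, ht, assoc, hip.w, comp_zero, sub_zero,
    comp_id]

end ExtLift


section Horseshoe

/-- Horseshoe-type lemma: a short exact sequence of presentations. -/
lemma horseshoe {X₁ Z X₂ K₁ P₁ K₂ P₂ : A} {α : X₁ ⟶ Z} {β : Z ⟶ X₂} (hZ : IsSes α β)
    {j₁ : K₁ ⟶ P₁} {q₁ : P₁ ⟶ X₁} (h₁ : IsSes j₁ q₁)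
    {j₂ : K₂ ⟶ P₂} {q₂ : P₂ ⟶ X₂} (h₂ : IsSes j₂ q₂) [Projective P₂] :
    ∃ (K : A) (k : K ⟶ P₁ ⊞ P₂) (G : P₁ ⊞ P₂ ⟶ Z) (κ₁ : K₁ ⟶ K) (π₂ : K ⟶ K₂),
      IsSes k G ∧ IsSes κ₁ π₂ ∧ κ₁ ≫ k = j₁ ≫ biprod.inl ∧ π₂ ≫ j₂ = k ≫ biprod.snd := by
  have hβe := hZ.epi
  have hαm := hZ.mono
  have hq₁e := h₁.epi
  have hq₂e := h₂.epi
  let ℓ : P₂ ⟶ Z := Projective.factorThru q₂ β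
  have hℓ : ℓ ≫ β = q₂ := Projective.factorThru_comp _ _
  let G : P₁ ⊞ P₂ ⟶ Z := biprod.desc (q₁ ≫ α) ℓ
  have hGexp : ∀ {W : A} (y : W ⟶ P₁ ⊞ P₂), y ≫ G = (y ≫ biprod.fst) ≫ q₁ ≫ α + (y ≫ biprod.snd) ≫ ℓ := by
    intro W y
    have : G = biprod.fst ≫ q₁ ≫ α + biprod.snd ≫ ℓ := by
      apply biprod.hom_ext' <;> simp [G]
    rw [this]
    simp [Preadditive.comp_add]
  have hGepi : Epi G := by
    rw [Preadditive.epi_iff_cancel_zero]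
    intro W z hz
    have hinl := biprod.inl ≫= hz
    have hinr := biprod.inr ≫= hz
    simp only [G, biprod.inl_desc_assoc, biprod.inr_desc_assoc, comp_zero] at hinl hinr
    have hαz : α ≫ z = 0 := by rwa [← cancel_epi q₁, comp_zero, ← assoc]
    obtain ⟨v, hv⟩ := hZ.exists_desc z hαz
    have : q₂ ≫ v = 0 := by rw [← hℓ, assoc, hv]; exact hinr
    have hv0 : v = 0 := by rwa [← cancel_epi q₂, comp_zero]
    rw [← hv, hv0, comp_zero]
  let K := kernel G
  let k : K ⟶ P₁ ⊞ P₂ := kernel.ι G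
  have hkG : IsSes k G := isSes_kernel hGepi
  have hκ₁0 : (j₁ ≫ biprod.inl) ≫ G = 0 := by
    simp only [G, assoc, biprod.inl_desc]
    rw [← assoc, h₁.w, zero_comp]
  let κ₁ : K₁ ⟶ K := kernel.lift G (j₁ ≫ biprod.inl) hκ₁0
  have hκ₁k : κ₁ ≫ k = j₁ ≫ biprod.inl := kernel.lift_ι _ _ _
  have hksnd : (k ≫ biprod.snd) ≫ q₂ = 0 := by
    have h0 := hGexp k
    rw [kernel.condition] at h0
    have h1 : (k ≫ biprod.snd) ≫ ℓ = -((k ≫ biprod.fst) ≫ q₁ ≫ α) := by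
      rw [eq_neg_iff_add_eq_zero, add_comm]
      exact h0.symm
    rw [← hℓ, ← assoc, h1, Preadditive.neg_comp, neg_eq_zero]
    simp only [assoc]
    rw [hZ.w]
    simp
  obtain ⟨π₂, hπ₂⟩ := h₂.exists_lift (k ≫ biprod.snd) hksnd
  have hκ₁π₂ : IsSes κ₁ π₂ := by
    have hj₂m := h₂.mono
    have hκ₁m : Mono κ₁ := by
      have : Mono (κ₁ ≫ k ≫ biprod.fst) := by
        rw [← assoc, hκ₁k, assoc, biprod.inl_fst, comp_id]
        exact h₁.mono
      exact mono_of_mono κ₁ (k ≫ biprod.fst)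
    have hw : κ₁ ≫ π₂ = 0 := by
      rw [← cancel_mono j₂, assoc, hπ₂, ← assoc, hκ₁k, assoc, biprod.inl_snd, comp_zero,
        zero_comp]
    -- epi via pullback trick
    have hθβ : (j₂ ≫ ℓ) ≫ β = 0 := by rw [assoc, hℓ, h₂.w]
    obtain ⟨θ, hθ⟩ := hZ.exists_lift (j₂ ≫ ℓ) hθβ
    let V := Limits.pullback q₁ θ
    have hpr₂ : Epi (pullback.snd q₁ θ) := by
      have : Epi q₁ := hq₁e
      infer_instance
    have hA : (pullback.snd q₁ θ ≫ j₂) ≫ ℓ = pullback.fst q₁ θ ≫ q₁ ≫ α := by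
      rw [assoc, ← hθ, ← assoc, ← pullback.condition, assoc]
    have hΨ0 : (biprod.lift (-(pullback.fst q₁ θ)) (pullback.snd q₁ θ ≫ j₂)) ≫ G = 0 := by
      rw [hGexp]
      have e1 : biprod.lift (-(pullback.fst q₁ θ)) (pullback.snd q₁ θ ≫ j₂) ≫ biprod.fst
          = -(pullback.fst q₁ θ) := by simp
      have e2 : biprod.lift (-(pullback.fst q₁ θ)) (pullback.snd q₁ θ ≫ j₂) ≫ biprod.snd
          = pullback.snd q₁ θ ≫ j₂ := by simp
      rw [e1, e2, hA, Preadditive.neg_comp, neg_add_cancel]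
    let Ψ : V ⟶ K := kernel.lift G _ hΨ0
    have hΨk : Ψ ≫ k = biprod.lift (-(pullback.fst q₁ θ)) (pullback.snd q₁ θ ≫ j₂) :=
      kernel.lift_ι _ _ _
    have hΨπ : Ψ ≫ π₂ = pullback.snd q₁ θ := by
      rw [← cancel_mono j₂, assoc, hπ₂, ← assoc, hΨk]
      simp
    have hπ₂e : Epi π₂ := by
      have : Epi (Ψ ≫ π₂) := by rw [hΨπ]; exact hpr₂
      exact epi_of_epi Ψ π₂
    refine isSes_of_ker hκ₁m hπ₂e hw ?_
    intro W wm hwm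
    have h1 : (wm ≫ k) ≫ biprod.snd = 0 := by
      rw [assoc, ← hπ₂, ← assoc, hwm, zero_comp]
    have h0' := hGexp (wm ≫ k)
    rw [assoc, kernel.condition, comp_zero] at h0'
    rw [h1, zero_comp, add_zero] at h0'
    have h2 : ((wm ≫ k) ≫ biprod.fst) ≫ q₁ = 0 := by
      rw [← cancel_mono α, assoc, zero_comp]
      exact h0'.symm
    obtain ⟨w', hw'⟩ := h₁.exists_lift ((wm ≫ k) ≫ biprod.fst) h2
    refine ⟨w', ?_⟩
    rw [← cancel_mono k, assoc, hκ₁k]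
    apply biprod.hom_ext
    · simp only [assoc, biprod.inl_fst, comp_id]
      rw [← assoc, hw', assoc]
    · simp only [assoc, biprod.inl_snd, comp_zero]
      rw [assoc] at h1
      exact h1.symm
  exact ⟨K, k, G, κ₁, π₂, hkG, hκ₁π₂, hκ₁k, hπ₂⟩

end Horseshoe


variable {T : Set A}

lemma subset_fac : T ⊆ Fac T := fun X hX => ⟨X, hX, 𝟙 X, inferInstance⟩

/-- `⊥₁ D` is closed under extensions, for any class `D`. -/
lemma leftExt1Perp_extension [EnoughProjectives A] {D : Set A} {X₁ Z X₂ : A}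
    {α : X₁ ⟶ Z} {β : Z ⟶ X₂} (hZ : IsSes α β)
    (h₁ : X₁ ∈ leftExt1Perp D) (h₂ : X₂ ∈ leftExt1Perp D) : Z ∈ leftExt1Perp D := by
  intro Y hY
  have hp₁ : IsSes (kernel.ι (Projective.π X₁)) (Projective.π X₁) := isSes_kernel inferInstance
  have hp₂ : IsSes (kernel.ι (Projective.π X₂)) (Projective.π X₂) := isSes_kernel inferInstance
  obtain ⟨K, k, G, κ₁, π₂, hkG, hκπ, hc₁, hc₂⟩ := horseshoe hZ hp₁ hp₂
  apply ext1Zero_of_lifting hkG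
  intro u
  obtain ⟨v₁, hv₁⟩ := exists_extend hp₁ (h₁ Y hY) (κ₁ ≫ u)
  have h0 : κ₁ ≫ (u - k ≫ biprod.fst ≫ v₁) = 0 := by
    rw [Preadditive.comp_sub, ← assoc, ← assoc, hc₁, assoc, assoc, biprod.inl_fst_assoc, hv₁,
      sub_self]
  obtain ⟨ub, hub⟩ := hκπ.exists_desc _ h0
  obtain ⟨v₂, hv₂⟩ := exists_extend hp₂ (h₂ Y hY) ub
  refine ⟨biprod.fst ≫ v₁ + biprod.snd ≫ v₂, ?_⟩
  rw [Preadditive.comp_add]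
  have : k ≫ biprod.snd ≫ v₂ = π₂ ≫ ub := by
    rw [← hv₂, ← assoc, ← hc₂, assoc]
  rw [this, hub]
  simp
  
lemma mem_leftPerpFac_of_pd (hT : IsWeakTilting T) {X : A}
    (hX : X ∈ leftExt1Perp T) (hpd : PdLeOne X) : X ∈ leftExt1Perp (Fac T) := by
  obtain ⟨P₁, P₀, a, b, hP₁, hP₀, hses⟩ := hpd
  intro M hM
  obtain ⟨T₀, hT₀, ρ, hρ⟩ := hM
  haveI := hP₀; haveI := hP₁; haveI := hρ
  apply ext1Zero_of_lifting hses
  intro u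
  obtain ⟨h', hh'⟩ := exists_extend hses (hX T₀ hT₀) (Projective.factorThru u ρ)
  refine ⟨h' ≫ ρ, ?_⟩
  rw [← assoc, hh', Projective.factorThru_comp]

lemma mem_leftPerpFac_of_mem (hT : IsWeakTilting T) {X : A} (hX : X ∈ T) :
    X ∈ leftExt1Perp (Fac T) :=
  mem_leftPerpFac_of_pd hT (fun Y hY => hT.ext1_zero hX hY) (hT.pd_le_one X hX)

lemma exists_embed_fac [EnoughProjectives A] (hT : IsWeakTilting T) (Y : A) :
    ∃ (E T1 : A) (jY : Y ⟶ E) (e : E ⟶ T1), E ∈ Fac T ∧ T1 ∈ T ∧ IsSes jY e := by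
  obtain ⟨T₀, T1, t, u, hT₀, hT1, htu⟩ := hT.coresolution (Projective.over Y) inferInstance
  obtain ⟨E, j, g, q, hjq, hcomm, hgq, hepi, -⟩ := htu.pushout (Projective.π Y)
  exact ⟨E, T1, j, q, ⟨T₀, hT₀, g, hepi inferInstance⟩, hT1, hjq⟩

lemma mem_fac_of_ext [EnoughProjectives A] (hT : IsWeakTilting T) {Y : A}
    (hY : ∀ T' ∈ T, Ext1Zero T' Y) : Y ∈ Fac T := by
  obtain ⟨E, T1, j, e, hE, hT1, hje⟩ := exists_embed_fac hT Y
  obtain ⟨s, hs⟩ := hY T1 hT1 j e hje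
  obtain ⟨r, hr⟩ := hje.exists_retraction hs
  obtain ⟨T₀, hT₀, ρ, hρ⟩ := hE
  haveI : IsSplitEpi r := ⟨⟨⟨j, hr⟩⟩⟩
  haveI := hρ
  exact ⟨T₀, hT₀, ρ ≫ r, epi_comp _ _⟩

lemma exists_special_precover [EnoughProjectives A] (hT : IsWeakTilting T) (X : A) :
    ∃ (E G : A) (j : E ⟶ G) (q : G ⟶ X), E ∈ Fac T ∧ G ∈ leftExt1Perp (Fac T) ∧ IsSes j q ∧
      (∃ (P T1 : A) (g : P ⟶ G) (q₂ : G ⟶ T1), Projective P ∧ T1 ∈ T ∧ IsSes g q₂) := by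
  have hab : IsSes (kernel.ι (Projective.π X)) (Projective.π X) := isSes_kernel inferInstance
  obtain ⟨E, T1, f, e, hE, hT1, hfe⟩ := exists_embed_fac hT (kernel (Projective.π X))
  obtain ⟨G, j, g, q, hjq, hcomm, hgq, -, hsecond⟩ := hab.pushout f
  obtain ⟨q₂, hgq₂, hjq₂⟩ := hsecond e hfe
  refine ⟨E, G, j, q, hE, ?_, hjq, Projective.over X, T1, g, q₂, inferInstance, hT1, hgq₂⟩
  exact leftExt1Perp_extension hgq₂ (fun Y _ => ext1Zero_of_projective _ Y)
    (mem_leftPerpFac_of_mem hT hT1)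

lemma pd_le_one_of_perp [EnoughProjectives A] (hT : IsWeakTilting T) {X : A}
    (hX : X ∈ leftExt1Perp (Fac T)) : PdLeOne X := by
  obtain ⟨E, G, j, q, hE, hG, hjq, P, T1, g, q₂, hP, hT1, hgq₂⟩ := exists_special_precover hT X
  haveI := hP
  -- the sequence 0 → E → G → X → 0 splits
  obtain ⟨s, hs⟩ := hX E hE j q hjq
  obtain ⟨eiso⟩ := hjq.nonempty_biprodIso hs
  -- projective presentation of G of length one
  obtain ⟨R₁, R₀, c, r, hR₁, hR₀, hcr⟩ := hT.pd_le_one T1 hT1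
  haveI := hR₀; haveI := hR₁
  have hidP : IsSes (kernel.ι (𝟙 P)) (𝟙 P) := isSes_kernel inferInstance
  obtain ⟨K, k, Gm, κ₁, π₂, hkGm, hκπ, hc₁, hc₂⟩ := horseshoe hgq₂ hidP hcr
  -- κ₁ = 0, hence π₂ is an isomorphism and K is projective
  have hκ₁0 : κ₁ = 0 := by
    have hkm := hkGm.mono
    rw [← cancel_mono k, hc₁, zero_comp]
    have : kernel.ι (𝟙 P) = 0 := by
      have := kernel.condition (𝟙 P)
      rwa [comp_id] at this
    rw [this, zero_comp]
  haveI hπ₂m : Mono π₂ := by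
    rw [Preadditive.mono_iff_cancel_zero]
    intro W w hw
    obtain ⟨w', hw'⟩ := hκπ.exists_lift w hw
    rw [← hw', hκ₁0, comp_zero]
  haveI hπ₂e : Epi π₂ := hκπ.epi
  haveI hπiso : IsIso π₂ := isIso_of_mono_of_epi π₂
  haveI hKproj : Projective K := Projective.of_iso (asIso π₂).symm hR₁
  -- Schanuel-style comparison
  have hpX : IsSes (kernel.ι (Projective.π X)) (Projective.π X) := isSes_kernel inferInstance
  have hpE : IsSes (kernel.ι (Projective.π E)) (Projective.π E) := isSes_kernel inferInstance
  have hsum := hpE.biprodMap hpX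
  have hsum' := hsum.comp_iso_right eiso.symm
  obtain ⟨E', j', q', t, hj'q', hcomm', hjt', hsec⟩ :=
    hkGm.pullback (biprod.map (Projective.π E) (Projective.π X) ≫ eiso.symm.hom)
  obtain ⟨j₂, hj₂t, hj₂q'⟩ := hsec _ hsum'
  -- E' is projective
  haveI hq'epi := hj'q'.epi
  have hs' : Projective.factorThru (𝟙 _) q' ≫ q' = 𝟙 _ := Projective.factorThru_comp _ _
  obtain ⟨eiso'⟩ := hj'q'.nonempty_biprodIso hs'
  haveI hE'proj : Projective E' := Projective.of_iso eiso'.symm inferInstance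
  -- the sequence 0 → KE ⊞ KX → E' → P ⊞ R₀ → 0 splits
  haveI := hj₂t.epi
  have hs₂ : Projective.factorThru (𝟙 _) t ≫ t = 𝟙 _ := Projective.factorThru_comp _ _
  obtain ⟨r₂, hr₂⟩ := hj₂t.exists_retraction hs₂
  -- kernel (π X) is a retract of E'
  have hretr : (biprod.inr ≫ j₂) ≫ (r₂ ≫ biprod.snd) = 𝟙 (kernel (Projective.π X)) := by
    rw [assoc, ← assoc j₂, hr₂, id_comp, biprod.inr_snd]
  haveI : Projective (kernel (Projective.π X)) := projective_of_retract hretr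
  exact ⟨kernel (Projective.π X), Projective.over X, kernel.ι (Projective.π X), Projective.π X,
    this, inferInstance, hpX⟩

lemma tilting_inter [EnoughProjectives A] (hTT : IsTilting T) :
    leftExt1Perp (Fac T) ∩ Fac T = T := by
  have hT := hTT.toIsWeakTilting
  apply Set.Subset.antisymm
  · rintro L ⟨hL1, hL2⟩
    obtain ⟨X₀, φ, hX₀T, happ⟩ := hTT.contravariantly_finite L
    obtain ⟨S, hS, ρ, hρ⟩ := hL2
    obtain ⟨g0, hg0⟩ := happ S hS ρ
    haveI := hρ
    haveI : Epi φ := by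
      have : Epi (g0 ≫ φ) := by rw [hg0]; exact hρ
      exact epi_of_epi g0 φ
    have hMφ : IsSes (kernel.ι φ) φ := isSes_kernel inferInstance
    have hM : ∀ T' ∈ T, Ext1Zero T' (kernel φ) := by
      intro T' hT' E i p hip
      obtain ⟨G'', j'', g'', q'', hjq'', hcomm'', hgq'', -, hsecond''⟩ :=
        hip.pushout (kernel.ι φ)
      obtain ⟨q₂'', hgq₂'', hjq₂''⟩ := hsecond'' φ hMφ
      obtain ⟨s, hs⟩ := hT.ext1_zero hT' hX₀T j'' q'' hjq''
      obtain ⟨θ, hθ⟩ := happ T' hT' (s ≫ q₂'')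
      have h0 : (s - θ ≫ j'') ≫ q₂'' = 0 := by
        rw [Preadditive.sub_comp, assoc, hjq₂'', hθ, sub_self]
      obtain ⟨σ, hσ⟩ := hgq₂''.exists_lift _ h0
      refine ⟨σ, ?_⟩
      rw [← hgq'', ← assoc, hσ, Preadditive.sub_comp, hs, assoc, hjq''.w, comp_zero, sub_zero]
    have hMF : kernel φ ∈ Fac T := mem_fac_of_ext hT hM
    obtain ⟨s₀, hs₀⟩ := hL1 (kernel φ) hMF (kernel.ι φ) φ hMφ
    exact hT.summand_mem hX₀T ⟨s₀, φ, hs₀⟩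
  · intro T' hT'
    exact ⟨mem_leftPerpFac_of_mem hT hT', subset_fac hT'⟩


end Proofs

/-- For a weak tilting subcategory `T` of an abelian category with
enough projectives, `(^{⊥₁}(Fac T), Fac T)` is a complete cotorsion pair and
`^{⊥₁}(Fac T) = {X ∈ ^{⊥₁}T : pd X ≤ 1}`; if moreover `T` is tilting, then
`^{⊥₁}(Fac T) ∩ Fac T = T`. -/
theorem statement12 [EnoughProjectives A] {T : Set A} (hT : IsWeakTilting T) :
    IsCotorsionPair (leftExt1Perp (Fac T)) (Fac T) ∧
    leftExt1Perp (Fac T) = {X : A | X ∈ leftExt1Perp T ∧ PdLeOne X} ∧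
    (IsTilting T → leftExt1Perp (Fac T) ∩ Fac T = T) := by

  refine ⟨⟨rfl, ?_, ?_, ?_⟩, ?_, fun hTT => tilting_inter hTT⟩
  · apply Set.Subset.antisymm
    · intro Y hY X hX
      exact hX Y hY
    · intro Y hY
      exact mem_fac_of_ext hT fun T' hT' => hY T' (mem_leftPerpFac_of_mem hT hT')
  · intro X
    obtain ⟨E, G, j, q, hE, hG, hjq, -⟩ := exists_special_precover hT X
    exact ⟨E, G, j, q, hE, hG, hjq⟩
  · intro X
    obtain ⟨E, T1, jY, e, hE, hT1, hje⟩ := exists_embed_fac hT X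
    exact ⟨E, T1, jY, e, hE, mem_leftPerpFac_of_mem hT hT1, hje⟩
  · apply Set.Subset.antisymm
    · intro X hX
      exact ⟨fun Y hY => hX Y (subset_fac hY), pd_le_one_of_perp hT hX⟩
    · rintro X ⟨h1, h2⟩
      exact mem_leftPerpFac_of_pd hT h1 h2

end Paper
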